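/- Suppose the conditional product measures π_{L,N} with weights w satisfying w(n−1)/w(n) → φ_c ∈ (0,∞] exhibit condensation (lim_{K→∞} lim_{N→∞} π_{L,N}[M_L ≥ N−K] = 1). Then φ_c < ∞, z(φ_c) = Σ_n w(n)φ_c^n < ∞, and Z_{L,N}/w(N) → L z(φ_c)^{L−1} as N → ∞. -/

import Mathlib

open Filter Topology
open Finset

/-- `L`-fold convolution of the weights: `Z_{L,N} = Σ_{η ∈ ℕ^L, Ση = N} Π_x w(η_x)`. -/
noncomputable def Zconv (w : ℕ → ℝ) (L N : ℕ) : ℝ :=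
  ∑ η ∈ Finset.Nat.antidiagonalTuple L N, ∏ x, w (η x)

/-- Probability under `π_{L,N}` that the maximum occupation number is at least `N - K`. -/
noncomputable def probMaxGe (w : ℕ → ℝ) (L N K : ℕ) : ℝ :=
  (∑ η ∈ Finset.Nat.antidiagonalTuple L N,
      if N - K ≤ Finset.univ.sup η then ∏ x, w (η x) else 0) / Zconv w L N

lemma Zconv_nonneg (w : ℕ → ℝ) (hw : ∀ n, 0 < w n) (L N : ℕ) : 0 ≤ Zconv w L N :=
  Finset.sum_nonneg fun η _ => Finset.prod_nonneg fun x _ => (hw _).le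

lemma Zconv_pos (w : ℕ → ℝ) (hw : ∀ n, 0 < w n) {L : ℕ} (hL : 1 ≤ L) (N : ℕ) :
    0 < Zconv w L N := by
  apply Finset.sum_pos (fun η _ => Finset.prod_pos fun x _ => hw _)
  refine ⟨fun i => if i = (⟨0, hL⟩ : Fin L) then N else 0, ?_⟩
  rw [Finset.Nat.mem_antidiagonalTuple]
  simp

lemma Zconv_zero_eq (w : ℕ → ℝ) (L : ℕ) : Zconv w L 0 = w 0 ^ L := by
  rw [Zconv, Finset.Nat.antidiagonalTuple_zero_right, Finset.sum_singleton]
  simp [Finset.prod_const]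

/-- the slice lemma -/
lemma slice_sum (w : ℕ → ℝ) (l : ℕ) (x : Fin (l + 1)) {v N : ℕ} (hv : v ≤ N) :
    ∑ η ∈ (Finset.Nat.antidiagonalTuple (l + 1) N).filter (fun η => η x = v),
        ∏ y, w (η y) = w v * Zconv w l (N - v) := by
  rw [Zconv, Finset.mul_sum]
  refine Finset.sum_nbij' (fun η => x.removeNth η) (fun ζ => x.insertNth v ζ) ?_ ?_ ?_ ?_ ?_
  · intro η hη
    rw [Finset.mem_filter, Finset.Nat.mem_antidiagonalTuple] at hη
    rw [Finset.Nat.mem_antidiagonalTuple]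
    have h2 := Fin.sum_univ_succAbove η x
    rw [hη.2] at h2
    have h1 := hη.1
    simp only [Fin.removeNth]
    omega
  · intro ζ hζ
    rw [Finset.Nat.mem_antidiagonalTuple] at hζ
    rw [Finset.mem_filter, Finset.Nat.mem_antidiagonalTuple]
    have h3 : ∀ j, x.insertNth (α := fun _ => ℕ) v ζ (x.succAbove j) = ζ j := fun j =>
      Fin.insertNth_apply_succAbove (α := fun _ => ℕ) x v ζ j
    have h4 : x.insertNth (α := fun _ => ℕ) v ζ x = v :=
      Fin.insertNth_apply_same (α := fun _ => ℕ) x v ζ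
    constructor
    · beta_reduce
      rw [Fin.sum_univ_succAbove (x.insertNth v ζ) x, h4,
        Finset.sum_congr rfl fun j (_ : j ∈ Finset.univ) => h3 j, hζ]
      omega
    · exact h4
  · intro η hη
    rw [Finset.mem_filter] at hη
    rw [← hη.2]
    exact Fin.insertNth_self_removeNth x η
  · intro ζ _
    exact Fin.removeNth_insertNth (α := fun _ => ℕ) x v ζ
  · intro η hη
    rw [Finset.mem_filter] at hη
    rw [Fin.prod_univ_succAbove (fun y => w (η y)) x, hη.2]
    simp only [Fin.removeNth]

lemma Zconv_succ (w : ℕ → ℝ) (l N : ℕ) :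
    Zconv w (l + 1) N = ∑ v ∈ Finset.range (N + 1), w v * Zconv w l (N - v) := by
  have hmaps : ∀ η ∈ Finset.Nat.antidiagonalTuple (l + 1) N,
      (fun (η : Fin (l+1) → ℕ) => η 0) η ∈ Finset.range (N + 1) := by
    intro η hη
    rw [Finset.Nat.mem_antidiagonalTuple] at hη
    rw [Finset.mem_range, Nat.lt_succ_iff, ← hη]
    exact Finset.single_le_sum (f := fun i => η i) (fun i _ => Nat.zero_le _) (Finset.mem_univ 0)
  have hfib := Finset.sum_fiberwise_of_maps_to hmaps (fun η => ∏ y, w (η y))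
  rw [Zconv, ← hfib]
  refine Finset.sum_congr rfl fun v hv => ?_
  rw [Finset.mem_range] at hv
  exact slice_sum w l 0 (Nat.lt_succ_iff.mp hv)

lemma num_eq (w : ℕ → ℝ) (l K N : ℕ) (hN : 2 * K < N) :
    (∑ η ∈ Finset.Nat.antidiagonalTuple (l + 1) N,
        if N - K ≤ Finset.univ.sup η then ∏ x, w (η x) else 0)
      = (l + 1 : ℕ) * ∑ m ∈ Finset.range (K + 1), w (N - m) * Zconv w l m := by
  have hsplit : ∀ η ∈ Finset.Nat.antidiagonalTuple (l + 1) N,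
      (if N - K ≤ Finset.univ.sup η then ∏ x, w (η x) else 0)
        = ∑ x : Fin (l + 1), if N - K ≤ η x then ∏ y, w (η y) else 0 := by
    intro η hη
    rw [Finset.Nat.mem_antidiagonalTuple] at hη
    by_cases h : N - K ≤ Finset.univ.sup η
    · rw [if_pos h]
      obtain ⟨x₀, -, hx₀⟩ :=
        (Finset.le_sup_iff (show (⊥ : ℕ) < N - K by rw [show (⊥ : ℕ) = 0 from rfl]; omega)).mp h
      rw [Finset.sum_eq_single x₀ ?_ (fun hx => absurd (Finset.mem_univ x₀) hx), if_pos hx₀]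
      intro x _ hxne
      have hno : ¬ (N - K ≤ η x) := by
        intro hcon
        have hpair : η x + η x₀ ≤ N := by
          rw [← Finset.sum_pair hxne, ← hη]
          exact Finset.sum_le_sum_of_subset (Finset.subset_univ _)
        omega
      rw [if_neg hno]
    · rw [if_neg h]
      symm
      exact Finset.sum_eq_zero fun x _ =>
        if_neg (fun hcon => h (hcon.trans (Finset.le_sup (Finset.mem_univ x))))
  rw [Finset.sum_congr rfl hsplit, Finset.sum_comm]
  have hinner : ∀ x : Fin (l + 1),
      (∑ η ∈ Finset.Nat.antidiagonalTuple (l + 1) N,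
          if N - K ≤ η x then ∏ y, w (η y) else 0)
        = ∑ m ∈ Finset.range (K + 1), w (N - m) * Zconv w l m := by
    intro x
    rw [← Finset.sum_filter]
    have hle : ∀ η ∈ Finset.Nat.antidiagonalTuple (l + 1) N, η x ≤ N := by
      intro η hη
      rw [Finset.Nat.mem_antidiagonalTuple] at hη
      rw [← hη]
      exact Finset.single_le_sum (f := fun i => η i) (fun i _ => Nat.zero_le _)
        (Finset.mem_univ x)
    have hmaps : ∀ η ∈ (Finset.Nat.antidiagonalTuple (l + 1) N).filter
        (fun η => N - K ≤ η x), N - η x ∈ Finset.range (K + 1) := by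
      intro η hη
      rw [Finset.mem_filter] at hη
      have := hle η hη.1
      have := hη.2
      rw [Finset.mem_range]
      omega
    rw [← Finset.sum_fiberwise_of_maps_to hmaps (fun η => ∏ y, w (η y))]
    refine Finset.sum_congr rfl fun m hm => ?_
    rw [Finset.mem_range] at hm
    rw [Finset.filter_filter]
    have hcongr : ((Finset.Nat.antidiagonalTuple (l + 1) N).filter
          (fun η => (N - K ≤ η x) ∧ N - η x = m))
        = (Finset.Nat.antidiagonalTuple (l + 1) N).filter (fun η => η x = N - m) := by
      apply Finset.filter_congr
      intro η hη
      have := hle η hη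
      constructor
      · intro ⟨h1, h2⟩; omega
      · intro h1; exact ⟨by omega, by omega⟩
    rw [hcongr, slice_sum w l x (show N - m ≤ N by omega)]
    congr 2
    omega
  rw [Finset.sum_congr rfl fun x _ => hinner x, Finset.sum_const, Finset.card_univ,
    Fintype.card_fin, nsmul_eq_mul]

lemma Zconv_ge_single (w : ℕ → ℝ) (hw : ∀ n, 0 < w n) (l m : ℕ) :
    w m * w 0 ^ l ≤ Zconv w (l + 1) m := by
  have hmem : (Fin.cons m 0 : Fin (l + 1) → ℕ) ∈ Finset.Nat.antidiagonalTuple (l + 1) m := by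
    rw [Finset.Nat.mem_antidiagonalTuple, Fin.sum_cons]
    simp
  have := Finset.single_le_sum
    (f := fun η : Fin (l + 1) → ℕ => ∏ x, w (η x))
    (fun η _ => Finset.prod_nonneg fun x _ => (hw _).le) hmem
  refine le_trans (le_of_eq ?_) this
  show w m * w 0 ^ l = ∏ x : Fin (l + 1), w ((Fin.cons m 0 : Fin (l + 1) → ℕ) x)
  rw [Fin.prod_univ_succ]
  simp [Finset.prod_const]

lemma tendsto_ratio_pow {w : ℕ → ℝ} (hw : ∀ n, 0 < w n) {φ : ℝ}
    (h : Tendsto (fun n => w n / w (n + 1)) atTop (𝓝 φ)) (m : ℕ) :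
    Tendsto (fun N => w (N - m) / w N) atTop (𝓝 (φ ^ m)) := by
  induction m with
  | zero =>
    simp only [Nat.sub_zero, pow_zero]
    exact tendsto_const_nhds.congr (fun N => (div_self (hw N).ne').symm)
  | succ m ih =>
    have h1 : Tendsto (fun N => w (N - (m + 1)) / w (N - m)) atTop (𝓝 φ) := by
      have h2 := h.comp (tendsto_sub_atTop_nat (m + 1))
      apply h2.congr'
      filter_upwards [eventually_ge_atTop (m + 1)] with N hN
      simp only [Function.comp_apply]
      congr 2
      omega
    have h3 := h1.mul ih
    rw [show φ * φ ^ m = φ ^ (m + 1) by ring] at h3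
    apply h3.congr'
    filter_upwards [eventually_ge_atTop (m + 1)] with N hN
    rw [div_mul_div_cancel₀]
    exact (hw _).ne'

lemma tendsto_shift_zero {w : ℕ → ℝ} (hw : ∀ n, 0 < w n)
    (h : Tendsto (fun n => w n / w (n + 1)) atTop atTop) :
    ∀ d : ℕ, 1 ≤ d → Tendsto (fun M => w (M + d) / w M) atTop (𝓝 0) := by
  have base : Tendsto (fun M => w (M + 1) / w M) atTop (𝓝 0) := by
    have := tendsto_inv_atTop_zero.comp h
    apply this.congr
    intro M
    simp only [Function.comp_apply]
    rw [inv_div]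
  intro d hd
  induction d, hd using Nat.le_induction with
  | base => exact base
  | succ d hd ih =>
    have h1 : Tendsto (fun M => w (M + d + 1) / w (M + d)) atTop (𝓝 0) := by
      have := base.comp (tendsto_add_atTop_nat d)
      apply this.congr
      intro M
      simp [Function.comp]
    have h2 := h1.mul ih
    rw [mul_zero] at h2
    apply h2.congr
    intro M
    rw [show M + (d + 1) = M + d + 1 from rfl, div_mul_div_cancel₀ (hw _).ne']

lemma Zconv_zero_left (w : ℕ → ℝ) (m : ℕ) :
    Zconv w 0 m = if m = 0 then 1 else 0 := by
  cases m with
  | zero => rw [Zconv, Finset.Nat.antidiagonalTuple_zero_zero, Finset.sum_singleton]; simp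
  | succ m => rw [Zconv, Finset.Nat.antidiagonalTuple_zero_succ, Finset.sum_empty]; simp

lemma hasSum_Zconv (w : ℕ → ℝ) (hw : ∀ n, 0 < w n) {φ : ℝ} (hφ : 0 ≤ φ)
    (hsum : Summable fun n => w n * φ ^ n) (l : ℕ) :
    HasSum (fun m => Zconv w l m * φ ^ m) ((∑' n, w n * φ ^ n) ^ l) := by
  have hZnn : ∀ j m, 0 ≤ Zconv w j m := fun j m => Zconv_nonneg w hw j m
  induction l with
  | zero =>
    rw [pow_zero]
    have h0 : (fun m => Zconv w 0 m * φ ^ m) = (fun m : ℕ => if m = 0 then (1 : ℝ) else 0) := by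
      funext m
      rw [Zconv_zero_left]
      cases m <;> simp
    rw [h0]
    exact hasSum_ite_eq 0 1
  | succ l ih =>
    have hfn : ∀ n, 0 ≤ w n * φ ^ n := fun n => mul_nonneg (hw n).le (pow_nonneg hφ n)
    have hf : Summable fun n => ‖w n * φ ^ n‖ :=
      hsum.congr fun n => (Real.norm_of_nonneg (hfn n)).symm
    have hgn : ∀ m, 0 ≤ Zconv w l m * φ ^ m :=
      fun m => mul_nonneg (hZnn l m) (pow_nonneg hφ m)
    have hg : Summable fun m => ‖Zconv w l m * φ ^ m‖ :=
      ih.summable.congr fun m => (Real.norm_of_nonneg (hgn m)).symm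
    have hkey := (summable_norm_sum_mul_antidiagonal_of_summable_norm hf hg).of_norm
    have htsum := tsum_mul_tsum_eq_tsum_sum_antidiagonal_of_summable_norm hf hg
    rw [ih.tsum_eq] at htsum
    have hfun : (fun m => Zconv w (l + 1) m * φ ^ m) = (fun m =>
        ∑ kl ∈ Finset.HasAntidiagonal.antidiagonal m, (w kl.1 * φ ^ kl.1) * (Zconv w l kl.2 * φ ^ kl.2)) := by
      funext m
      rw [Finset.Nat.sum_antidiagonal_eq_sum_range_succ
        (fun i j => (w i * φ ^ i) * (Zconv w l j * φ ^ j)), Zconv_succ, Finset.sum_mul]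
      refine Finset.sum_congr rfl fun v hv => ?_
      rw [Finset.mem_range, Nat.lt_succ_iff] at hv
      have hpow : φ ^ m = φ ^ v * φ ^ (m - v) := by
        rw [← pow_add]
        congr 1
        omega
      rw [hpow]
      ring
    have hfinal := hkey.hasSum
    rw [← htsum] at hfinal
    rw [hfun, pow_succ']
    exact hfinal

/-- If the conditional product measures with weights `w` satisfying
`w(n-1)/w(n) → φ_c ∈ (0,∞]` exhibit condensation, then `φ_c < ∞`,
`z(φ_c) = Σ w(n) φ_c^n < ∞` and `Z_{L,N}/w(N) → L z(φ_c)^{L-1}`. -/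
theorem condensation_characterization (w : ℕ → ℝ) (hw : ∀ n, 0 < w n)
    (φc : ENNReal) (hφpos : 0 < φc)
    (hreg : Tendsto (fun n => ENNReal.ofReal (w n / w (n + 1))) atTop (𝓝 φc))
    (L : ℕ) (hL : 2 ≤ L)
    (hcond : ∃ a : ℕ → ℝ,
      (∀ K : ℕ, Tendsto (fun N => probMaxGe w L N K) atTop (𝓝 (a K))) ∧
      Tendsto a atTop (𝓝 1)) :
    φc < ⊤ ∧
    (Summable fun n : ℕ => w n * φc.toReal ^ n) ∧
    Tendsto (fun N => Zconv w L N / w N) atTop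
      (𝓝 ((L : ℝ) * (∑' n : ℕ, w n * φc.toReal ^ n) ^ (L - 1))) := by
  obtain ⟨a, ha, ha1⟩ := hcond
  obtain ⟨l, rfl⟩ : ∃ l, L = l + 2 := ⟨L - 2, by omega⟩
  have hZpos : ∀ N, 0 < Zconv w (l + 2) N := fun N => Zconv_pos w hw (by omega) N
  have hZkpos : ∀ N, 0 < Zconv w (l + 1) N := fun N => Zconv_pos w hw (by omega) N
  have hnum_nonneg : ∀ K N, (0:ℝ) ≤ ∑ η ∈ Finset.Nat.antidiagonalTuple (l + 2) N,
      (if N - K ≤ Finset.univ.sup η then ∏ x, w (η x) else 0) := by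
    intro K N
    refine Finset.sum_nonneg fun η _ => ?_
    split
    · exact Finset.prod_nonneg fun x _ => (hw _).le
    · exact le_rfl
  have hnum_le : ∀ K N, (∑ η ∈ Finset.Nat.antidiagonalTuple (l + 2) N,
      (if N - K ≤ Finset.univ.sup η then ∏ x, w (η x) else 0)) ≤ Zconv w (l + 2) N := by
    intro K N
    refine Finset.sum_le_sum fun η _ => ?_
    split
    · exact le_rfl
    · exact Finset.prod_nonneg fun x _ => (hw _).le
  have hprob : ∀ K N, 2 * K < N → probMaxGe w (l + 2) N K =
      (((l + 2 : ℕ) : ℝ) * ∑ m ∈ Finset.range (K + 1), w (N - m) * Zconv w (l + 1) m)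
        / Zconv w (l + 2) N := by
    intro K N hN
    rw [probMaxGe, num_eq w (l + 1) K N hN]
  -- Step 1 : φc is finite
  have hφtop : φc ≠ ⊤ := by
    intro htop
    rw [htop] at hreg
    have hrat : Tendsto (fun n => w n / w (n + 1)) atTop atTop := by
      rw [tendsto_atTop]
      intro b
      obtain ⟨q, hq⟩ := exists_nat_gt b
      have h1 : ∀ᶠ n in atTop, ((q : ENNReal)) < ENNReal.ofReal (w n / w (n + 1)) :=
        hreg.eventually (eventually_gt_nhds (ENNReal.natCast_lt_top q))
      filter_upwards [h1] with n hn
      have h2 : ((q : ℝ)) < w n / w (n + 1) := by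
        have := (ENNReal.lt_ofReal_iff_toReal_lt (ENNReal.natCast_ne_top q)).mp hn
        rwa [ENNReal.toReal_natCast] at this
      exact (hq.trans h2).le
    have hzero : ∀ K, a K = 0 := by
      intro K
      refine tendsto_nhds_unique (ha K) ?_
      have hshift : ∀ m ∈ Finset.range (K + 1),
          Tendsto (fun N => w (N - m) / w (N - (K + 1))) atTop (𝓝 0) := by
        intro m hm
        rw [Finset.mem_range, Nat.lt_succ_iff] at hm
        have hd := tendsto_shift_zero hw hrat (K + 1 - m) (by omega)
        have h2 := hd.comp (tendsto_sub_atTop_nat (K + 1))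
        apply h2.congr'
        filter_upwards [eventually_ge_atTop (K + 1)] with N hN
        simp only [Function.comp_apply]
        congr 2
        omega
      have hB : Tendsto (fun N => ∑ m ∈ Finset.range (K + 1),
          (w (N - m) / w (N - (K + 1))) * (Zconv w (l + 1) m / Zconv w (l + 1) (K + 1)))
          atTop (𝓝 0) := by
        have h3 := tendsto_finset_sum (Finset.range (K + 1))
          (fun m hm => (hshift m hm).mul_const
            (Zconv w (l + 1) m / Zconv w (l + 1) (K + 1)))
        simpa using h3
      refine tendsto_of_tendsto_of_tendsto_of_le_of_le' tendsto_const_nhds hB ?_ ?_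
      · filter_upwards [] with N
        exact div_nonneg (hnum_nonneg K N) (hZpos N).le
      · filter_upwards [eventually_gt_atTop (2 * (K + 1))] with N hN
        have hN' : 2 * K < N := by omega
        have hN'' : 2 * (K + 1) < N := hN
        rw [hprob K N hN']
        -- the single-term lower bound on Z
        have hD0 : (0:ℝ) < w (N - (K + 1)) * Zconv w (l + 1) (K + 1) :=
          mul_pos (hw _) (hZkpos _)
        have hDpos : (0:ℝ) < ((l + 2 : ℕ) : ℝ) * (w (N - (K + 1)) * Zconv w (l + 1) (K + 1)) := by
          positivity
        have hDZ : ((l + 2 : ℕ) : ℝ) * (w (N - (K + 1)) * Zconv w (l + 1) (K + 1))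
            ≤ Zconv w (l + 2) N := by
          have h1 : w (N - (K + 1)) * Zconv w (l + 1) (K + 1)
              ≤ ∑ m ∈ Finset.range (K + 2), w (N - m) * Zconv w (l + 1) m := by
            refine Finset.single_le_sum (f := fun m => w (N - m) * Zconv w (l + 1) m)
              (fun m _ => mul_nonneg (hw _).le (hZkpos m).le) ?_
            rw [Finset.mem_range]
            omega
          have h2 : ((l + 2 : ℕ) : ℝ) * (w (N - (K + 1)) * Zconv w (l + 1) (K + 1))
              ≤ ((l + 2 : ℕ) : ℝ) * ∑ m ∈ Finset.range (K + 2), w (N - m) * Zconv w (l + 1) m := by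
            apply mul_le_mul_of_nonneg_left h1
            positivity
          refine h2.trans ?_
          have h3 := num_eq w (l + 1) (K + 1) N hN''
          rw [show ((l + 1 + 1 : ℕ) : ℝ) = ((l + 2 : ℕ) : ℝ) by push_cast; ring] at h3
          rw [← h3]
          exact hnum_le (K + 1) N
        have hnumK : (0:ℝ) ≤ ((l + 2 : ℕ) : ℝ)
            * ∑ m ∈ Finset.range (K + 1), w (N - m) * Zconv w (l + 1) m := by
          apply mul_nonneg (by positivity)
          exact Finset.sum_nonneg fun m _ => mul_nonneg (hw _).le (hZkpos m).le
        calc (((l + 2 : ℕ) : ℝ) * ∑ m ∈ Finset.range (K + 1), w (N - m) * Zconv w (l + 1) m)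
              / Zconv w (l + 2) N
            ≤ (((l + 2 : ℕ) : ℝ) * ∑ m ∈ Finset.range (K + 1), w (N - m) * Zconv w (l + 1) m)
              / (((l + 2 : ℕ) : ℝ) * (w (N - (K + 1)) * Zconv w (l + 1) (K + 1))) := by
              gcongr
          _ = (∑ m ∈ Finset.range (K + 1), w (N - m) * Zconv w (l + 1) m)
              / (w (N - (K + 1)) * Zconv w (l + 1) (K + 1)) := by
              rw [mul_div_mul_left _ _ (by positivity : ((l + 2 : ℕ) : ℝ) ≠ 0)]
          _ = ∑ m ∈ Finset.range (K + 1),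
              (w (N - m) / w (N - (K + 1))) * (Zconv w (l + 1) m / Zconv w (l + 1) (K + 1)) := by
              rw [Finset.sum_div]
              exact Finset.sum_congr rfl fun m _ => (div_mul_div_comm _ _ _ _).symm
    have hcontra : Tendsto (fun _ : ℕ => (0:ℝ)) atTop (𝓝 1) :=
      ha1.congr fun K => hzero K
    exact one_ne_zero (tendsto_nhds_unique hcontra tendsto_const_nhds)
  -- Step 2 : extract the real limit φ
  have hφlt : φc < ⊤ := Ne.lt_top hφtop
  set φ := φc.toReal with hφdef
  have hφ0 : (0:ℝ) ≤ φ := ENNReal.toReal_nonneg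
  have hratφ : Tendsto (fun n => w n / w (n + 1)) atTop (𝓝 φ) := by
    have h1 := (ENNReal.tendsto_toReal hφtop).comp hreg
    apply h1.congr
    intro n
    simp only [Function.comp_apply]
    rw [ENNReal.toReal_ofReal (div_nonneg (hw n).le (hw (n + 1)).le)]
  have hpow := tendsto_ratio_pow hw hratφ
  have hTK : ∀ K : ℕ, Tendsto (fun N => ∑ m ∈ Finset.range (K + 1),
      (w (N - m) / w N) * Zconv w (l + 1) m) atTop
      (𝓝 (∑ m ∈ Finset.range (K + 1), φ ^ m * Zconv w (l + 1) m)) :=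
    fun K => tendsto_finset_sum _ fun m _ => (hpow m).mul_const _
  set S : ℕ → ℝ := fun K => ∑ m ∈ Finset.range (K + 1), φ ^ m * Zconv w (l + 1) m with hSdef
  set c : ℝ := a 0 / (((l + 2 : ℕ) : ℝ) * Zconv w (l + 1) 0) with hcdef
  have hc : Tendsto (fun N => w N / Zconv w (l + 2) N) atTop (𝓝 c) := by
    have h0 := (ha 0).div_const (((l + 2 : ℕ) : ℝ) * Zconv w (l + 1) 0)
    apply h0.congr'
    filter_upwards [eventually_gt_atTop 0] with N hN
    rw [hprob 0 N (by omega), Finset.sum_range_one, Nat.sub_zero]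
    rw [div_div]
    rw [div_eq_div_iff (mul_pos (hZpos N) (mul_pos (by positivity) (hZkpos 0))).ne' (hZpos N).ne']
    ring
  have haK : ∀ K, a K = ((l + 2 : ℕ) : ℝ) * S K * c := by
    intro K
    refine tendsto_nhds_unique (ha K) ?_
    have h1 := ((hTK K).const_mul (((l + 2 : ℕ) : ℝ))).mul hc
    apply h1.congr'
    filter_upwards [eventually_gt_atTop (2 * K)] with N hN
    rw [hprob K N hN]
    have hsum_eq : (∑ m ∈ Finset.range (K + 1), (w (N - m) / w N) * Zconv w (l + 1) m) * w N
        = ∑ m ∈ Finset.range (K + 1), w (N - m) * Zconv w (l + 1) m := by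
      rw [Finset.sum_mul]
      refine Finset.sum_congr rfl fun m _ => ?_
      rw [mul_comm (w (N - m) / w N) (Zconv w (l + 1) m), mul_assoc,
        div_mul_cancel₀ _ (hw N).ne', mul_comm]
    rw [← hsum_eq]
    field_simp
  have hc0 : (0:ℝ) ≤ c :=
    ge_of_tendsto hc (Filter.Eventually.of_forall fun N =>
      div_nonneg (hw N).le (hZpos N).le)
  have hcpos : (0:ℝ) < c := by
    rcases hc0.lt_or_eq with h | h
    · exact h
    · exfalso
      have hzero : ∀ K, a K = 0 := by
        intro K
        rw [haK K, ← h, mul_zero]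
      have hcontra : Tendsto (fun _ : ℕ => (0:ℝ)) atTop (𝓝 1) :=
        ha1.congr fun K => hzero K
      exact one_ne_zero (tendsto_nhds_unique hcontra tendsto_const_nhds)
  have hLc : (((l + 2 : ℕ) : ℝ) * c) ≠ 0 := by positivity
  have hSlim : Tendsto S atTop (𝓝 (1 / (((l + 2 : ℕ) : ℝ) * c))) := by
    have h1 := ha1.div_const (((l + 2 : ℕ) : ℝ) * c)
    apply h1.congr
    intro K
    rw [haK K]
    field_simp
  have hg : HasSum (fun m => φ ^ m * Zconv w (l + 1) m) (1 / (((l + 2 : ℕ) : ℝ) * c)) := by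
    rw [hasSum_iff_tendsto_nat_of_nonneg
      (fun m => mul_nonneg (pow_nonneg hφ0 m) (Zconv_nonneg w hw _ m))]
    rw [← tendsto_add_atTop_iff_nat 1]
    exact hSlim
  have hsummable : Summable (fun n : ℕ => w n * φ ^ n) := by
    refine Summable.of_nonneg_of_le
      (fun n => mul_nonneg (hw n).le (pow_nonneg hφ0 n)) ?_
      (hg.summable.mul_right ((w 0 ^ l)⁻¹))
    intro n
    have hZ := Zconv_ge_single w hw l n
    have h2 : (0:ℝ) ≤ φ ^ n * (w 0 ^ l)⁻¹ :=
      mul_nonneg (pow_nonneg hφ0 n) (inv_nonneg.mpr (pow_nonneg (hw 0).le l))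
    calc w n * φ ^ n = (w n * w 0 ^ l) * (φ ^ n * (w 0 ^ l)⁻¹) := by
          symm
          rw [mul_mul_mul_comm, mul_inv_cancel₀ (pow_ne_zero l (hw 0).ne'), mul_one]
      _ ≤ Zconv w (l + 1) n * (φ ^ n * (w 0 ^ l)⁻¹) := mul_le_mul_of_nonneg_right hZ h2
      _ = φ ^ n * Zconv w (l + 1) n * (w 0 ^ l)⁻¹ := by ring
  have hZsum := hasSum_Zconv w hw hφ0 hsummable (l + 1)
  have hgswap : HasSum (fun m => Zconv w (l + 1) m * φ ^ m) (1 / (((l + 2 : ℕ) : ℝ) * c)) := by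
    have heq : (fun m => φ ^ m * Zconv w (l + 1) m) = (fun m => Zconv w (l + 1) m * φ ^ m) :=
      funext fun m => mul_comm _ _
    rw [← heq]
    exact hg
  have hzval : (∑' n : ℕ, w n * φ ^ n) ^ (l + 1) = 1 / (((l + 2 : ℕ) : ℝ) * c) :=
    HasSum.unique hZsum hgswap
  refine ⟨hφlt, hsummable, ?_⟩
  have hfinal : Tendsto (fun N => Zconv w (l + 2) N / w N) atTop (𝓝 c⁻¹) := by
    have h1 := hc.inv₀ hcpos.ne'
    apply h1.congr
    intro N
    rw [inv_div]
  have hgoalval : c⁻¹ = ((l + 2 : ℕ) : ℝ) * (∑' n : ℕ, w n * φ ^ n) ^ (l + 2 - 1) := by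
    rw [show l + 2 - 1 = l + 1 from rfl, hzval]
    field_simp
  rw [← hgoalval]
  exact hfinal
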